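/- Let φ: ℝⁿ → (-∞,∞] be convex and lower semicontinuous, and let L ⊆ ℝⁿ be a convex body with support function h_L. Then for s > 0, (φ* - h_{sL})*(x) = sup_{z ∈ sL} φ(x+z), where sL = {sz : z ∈ L}. -/

import Mathlib

open MeasureTheory Pointwise

noncomputable section

/-- Convexity for `(-∞,∞]`-valued functions. -/
def ConvexEReal {n : ℕ} (φ : EuclideanSpace ℝ (Fin n) → EReal) : Prop :=
  ∀ x y : EuclideanSpace ℝ (Fin n), ∀ a b : ℝ, 0 ≤ a → 0 ≤ b → a + b = 1 →
    φ (a • x + b • y) ≤ (a : EReal) * φ x + (b : EReal) * φ y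

/-- The Legendre transform `ψ*(y) = sup_x (⟨x,y⟩ - ψ(x))`. -/
def legendre {n : ℕ} (φ : EuclideanSpace ℝ (Fin n) → EReal)
    (y : EuclideanSpace ℝ (Fin n)) : EReal :=
  ⨆ x : EuclideanSpace ℝ (Fin n), ((inner ℝ x y : ℝ) : EReal) - φ x

/-- The support function of a set, as an `EReal`-valued function. -/
def supportFn {n : ℕ} (K : Set (EuclideanSpace ℝ (Fin n)))
    (y : EuclideanSpace ℝ (Fin n)) : EReal :=
  ⨆ z ∈ K, ((inner ℝ z y : ℝ) : EReal)

variable {n : ℕ}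

local notation "E" => EuclideanSpace ℝ (Fin n)

/- Aux EReal arithmetic -/
lemma aux_coe_sub_le (r c : ℝ) (b : EReal) (h : ((r - c : ℝ) : EReal) ≤ b) :
    (r : EReal) - b ≤ (c : EReal) := by
  induction b using EReal.rec with
  | bot => exact absurd (le_bot_iff.1 h) (EReal.coe_ne_bot _)
  | coe b =>
    rw [← EReal.coe_sub, EReal.coe_le_coe_iff] at *
    linarith
  | top => rw [EReal.sub_top]; exact bot_le

/-- Pointwise affine bound gives bound on legendre transform. -/
lemma legendre_le_of_affine_bound (φ : E → EReal) (hbot : ∀ x, φ x ≠ ⊥)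
    (y : E) (α : ℝ) (hA : ∀ x' (r' : ℝ), φ x' = (r' : EReal) → (inner ℝ x' y : ℝ) - r' ≤ α) :
    legendre φ y ≤ (α : EReal) := by
  refine iSup_le fun x' => ?_
  rcases eq_or_ne (φ x') ⊤ with h | h
  · rw [h, EReal.sub_top]; exact bot_le
  · have hr : φ x' = ((φ x').toReal : EReal) := (EReal.coe_toReal h (hbot x')).symm
    rw [hr, ← EReal.coe_sub, EReal.coe_le_coe_iff]
    exact hA x' _ hr

/-- Lower bound for the biconjugate from a bound on the conjugate. -/
lemma le_biconj (φ : E → EReal) (y : E) (α : ℝ) (hle : legendre φ y ≤ (α : EReal)) (x : E) :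
    (((inner ℝ y x : ℝ) - α : ℝ) : EReal) ≤ legendre (legendre φ) x := by
  refine le_trans ?_ (le_iSup (fun y' => ((inner ℝ y' x : ℝ) : EReal) - legendre φ y') y)
  rw [EReal.coe_sub]
  exact EReal.sub_le_sub le_rfl hle

/-- Easy half of Fenchel–Moreau. -/
lemma biconj_le (φ : E → EReal) (hbot : ∀ x, φ x ≠ ⊥) (x : E) :
    legendre (legendre φ) x ≤ φ x := by
  refine iSup_le fun y => ?_
  have key : ((inner ℝ x y : ℝ) : EReal) - φ x ≤ legendre φ y :=
    le_iSup (fun x' => ((inner ℝ x' y : ℝ) : EReal) - φ x') x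
  rcases eq_or_ne (φ x) ⊤ with h | h
  · rw [h]; exact le_top
  · have hr : φ x = ((φ x).toReal : EReal) := (EReal.coe_toReal h (hbot x)).symm
    rw [hr] at key ⊢
    rw [← EReal.coe_sub] at key
    have := aux_coe_sub_le (inner ℝ y x : ℝ) (φ x).toReal (legendre φ y)
      (by rwa [real_inner_comm y x] at key)
    exact this

/-- The epigraph of `φ`. -/
def epi (φ : E → EReal) : Set ((EuclideanSpace ℝ (Fin n)) × ℝ) :=
  {p | φ p.1 ≤ (p.2 : EReal)}

lemma epi_convex (φ : E → EReal) (hbot : ∀ x, φ x ≠ ⊥) (hconv : ConvexEReal φ) :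
    Convex ℝ (epi φ) := by
  intro p hp q hq a b ha hb hab
  simp only [epi, Set.mem_setOf_eq] at *
  have h1 : φ (a • p.1 + b • q.1) ≤ (a : EReal) * φ p.1 + (b : EReal) * φ q.1 :=
    hconv p.1 q.1 a b ha hb hab
  have hp1 : φ p.1 ≠ ⊤ := fun h => by simp [h] at hp
  have hq1 : φ q.1 ≠ ⊤ := fun h => by simp [h] at hq
  set r1 := (φ p.1).toReal with hr1
  set r2 := (φ q.1).toReal with hr2
  have e1 : φ p.1 = (r1 : EReal) := (EReal.coe_toReal hp1 (hbot _)).symm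
  have e2 : φ q.1 = (r2 : EReal) := (EReal.coe_toReal hq1 (hbot _)).symm
  have hle1 : r1 ≤ p.2 := by rw [e1] at hp; exact EReal.coe_le_coe_iff.1 hp
  have hle2 : r2 ≤ q.2 := by rw [e2] at hq; exact EReal.coe_le_coe_iff.1 hq
  calc φ (a • p.1 + b • q.1) ≤ (a : EReal) * φ p.1 + (b : EReal) * φ q.1 := h1
    _ = ((a * r1 + b * r2 : ℝ) : EReal) := by rw [e1, e2, ← EReal.coe_mul, ← EReal.coe_mul,
          EReal.coe_add]
    _ ≤ (((a • p + b • q).2 : ℝ) : EReal) := by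
          rw [EReal.coe_le_coe_iff]
          have : (a • p + b • q).2 = a * p.2 + b * q.2 := rfl
          rw [this]
          have := mul_le_mul_of_nonneg_left hle1 ha
          have := mul_le_mul_of_nonneg_left hle2 hb
          linarith

lemma epi_closed (φ : E → EReal) (hlsc : LowerSemicontinuous φ) :
    IsClosed (epi φ) := by
  rw [← isOpen_compl_iff]
  rw [isOpen_iff_mem_nhds]
  intro p hp
  simp only [epi, Set.mem_compl_iff, Set.mem_setOf_eq, not_le] at hp
  obtain ⟨q, hq1, hq2⟩ := EReal.exists_between_coe_real hp
  have hopen : IsOpen ({x : E | (q : EReal) < φ x} ×ˢ Set.Iio q) :=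
    (hlsc.isOpen_preimage q).prod isOpen_Iio
  refine Filter.mem_of_superset (hopen.mem_nhds ⟨hq2, EReal.coe_lt_coe_iff.1 hq1⟩) ?_
  rintro ⟨x, t⟩ ⟨hx, ht⟩
  simp only [epi, Set.mem_compl_iff, Set.mem_setOf_eq, not_le]
  exact lt_of_le_of_lt (EReal.coe_le_coe_iff.2 ht.le) hx

lemma sep_decomp (f : ((EuclideanSpace ℝ (Fin n)) × ℝ) →L[ℝ] ℝ) :
    ∃ y : E, ∀ (v : E) (t : ℝ), f (v, t) = (inner ℝ y v : ℝ) + t * f ((0 : E), (1 : ℝ)) := by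
  refine ⟨(InnerProductSpace.toDual ℝ E).symm
    (f.comp (ContinuousLinearMap.inl ℝ E ℝ)), fun v t => ?_⟩
  have h1 : ((v, t) : (EuclideanSpace ℝ (Fin n)) × ℝ) = (v, (0:ℝ)) + t • ((0:E), (1:ℝ)) := by
    simp [Prod.ext_iff]
  rw [h1, map_add, f.map_smul, smul_eq_mul, InnerProductSpace.toDual_symm_apply]
  rfl

lemma bound_of_sep_neg (φ : E → EReal) (f : ((EuclideanSpace ℝ (Fin n)) × ℝ) →L[ℝ] ℝ) (u : ℝ)
    (hfu : ∀ p ∈ epi φ, f p < u) (hc : f ((0:E), (1:ℝ)) < 0) :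
    ∃ (y : E) (α : ℝ),
      (∀ x' (r' : ℝ), φ x' = (r' : EReal) → (inner ℝ x' y : ℝ) - r' ≤ α) ∧
      (∀ v : E, (inner ℝ y v : ℝ) = (-(f ((0:E), (1:ℝ))))⁻¹ * f (v, (0:ℝ))) ∧
      α = u * (-(f ((0:E),(1:ℝ))))⁻¹ := by
  obtain ⟨y0, hy0⟩ := sep_decomp f
  set c := f ((0:E),(1:ℝ)) with hcdef
  have hcpos : 0 < -c := by linarith
  have hc0 : -c ≠ 0 := ne_of_gt hcpos
  have hinner : ∀ v : E, (inner ℝ ((-c)⁻¹ • y0) v : ℝ) = (-c)⁻¹ * f (v, (0:ℝ)) := by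
    intro v
    rw [real_inner_smul_left]
    congr 1
    rw [hy0 v 0]
    ring
  refine ⟨(-c)⁻¹ • y0, u * (-c)⁻¹, ?_, hinner, rfl⟩
  intro x' r' hr
  have hmem : (x', r') ∈ epi φ := by simp [epi, hr]
  have h2 := hfu _ hmem
  rw [hy0 x' r'] at h2
  have h5 : (inner ℝ x' ((-c)⁻¹ • y0) : ℝ) = (-c)⁻¹ * (inner ℝ y0 x' : ℝ) := by
    rw [real_inner_comm, hinner x', hy0 x' 0]
    ring_nf
  rw [h5]
  have h3 := mul_lt_mul_of_pos_left h2 (inv_pos.2 hcpos)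
  have h4 : (-c)⁻¹ * -c = 1 := inv_mul_cancel₀ hc0
  have h6 : (-c)⁻¹ * (r' * c) = -r' := by
    have he : (-c)⁻¹ * (r' * c) = -(r' * ((-c)⁻¹ * -c)) := by ring
    rw [he, h4, mul_one]
  have h7 := mul_add ((-c)⁻¹) ((inner ℝ y0 x' : ℝ)) (r' * c)
  linarith [h3, h6, h7]

lemma biconj_ge (φ : E → EReal) (hbot : ∀ x, φ x ≠ ⊥) (hproper : ∃ x, φ x ≠ ⊤)
    (hconv : ConvexEReal φ) (hlsc : LowerSemicontinuous φ) (x : E) :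
    φ x ≤ legendre (legendre φ) x := by
  by_contra hcon
  push_neg at hcon
  obtain ⟨t, ht1, ht2⟩ := EReal.exists_between_coe_real hcon
  have hcl := epi_closed φ hlsc
  have hcv := epi_convex φ hbot hconv
  obtain ⟨x₀, hx₀⟩ := hproper
  have e₀ : φ x₀ = (((φ x₀).toReal : ℝ) : EReal) := (EReal.coe_toReal hx₀ (hbot x₀)).symm
  set r₀ := (φ x₀).toReal with hr₀
  have hxt : (x, t) ∉ epi φ := by
    simp only [epi, Set.mem_setOf_eq, not_le]
    exact ht2
  obtain ⟨f, u, hfu, hux⟩ := geometric_hahn_banach_closed_point hcv hcl hxt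
  obtain ⟨y0, hy0⟩ := sep_decomp f
  set c := f ((0:E),(1:ℝ)) with hcdef
  -- c ≤ 0
  have hcle : c ≤ 0 := by
    by_contra hpos
    push_neg at hpos
    set T := max r₀ ((u - (inner ℝ y0 x₀ : ℝ)) / c + 1) with hT
    have hmem : (x₀, T) ∈ epi φ := by
      simp only [epi, Set.mem_setOf_eq]
      rw [e₀]
      exact EReal.coe_le_coe_iff.2 (le_max_left _ _)
    have h2 := hfu _ hmem
    rw [hy0 x₀ T] at h2
    have hTle : (u - (inner ℝ y0 x₀ : ℝ)) / c + 1 ≤ T := le_max_right _ _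
    have h9 := mul_le_mul_of_nonneg_right hTle (le_of_lt hpos)
    have h8 : ((u - (inner ℝ y0 x₀ : ℝ)) / c + 1) * c = (u - (inner ℝ y0 x₀ : ℝ)) + c := by
      rw [add_mul, one_mul, div_mul_cancel₀ _ (ne_of_gt hpos)]
    linarith [h2, h9, h8]
  rcases lt_or_eq_of_le hcle with hclt | hceq
  · -- c < 0
    obtain ⟨y, α, hA, hyv, hα⟩ := bound_of_sep_neg φ f u hfu hclt
    have hleg := legendre_le_of_affine_bound φ hbot y α hA
    have hlb := le_biconj φ y α hleg x
    have hfx := hux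
    rw [hy0 x t] at hfx
    have hcpos : 0 < -c := by linarith
    have h4 : (-c)⁻¹ * -c = 1 := inv_mul_cancel₀ (ne_of_gt hcpos)
    have hyx : (inner ℝ y x : ℝ) = (-c)⁻¹ * (inner ℝ y0 x : ℝ) := by
      rw [hyv x, hy0 x 0]
      rw [hcdef]
      ring_nf
    rw [← hcdef] at hα
    have hgt : t < (inner ℝ y x : ℝ) - α := by
      rw [hyx, hα]
      have h3 := mul_lt_mul_of_pos_left hfx (inv_pos.2 hcpos)
      have h6 : (-c)⁻¹ * (t * c) = -t := by
        have he : (-c)⁻¹ * (t * c) = -(t * ((-c)⁻¹ * -c)) := by ring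
        rw [he, h4, mul_one]
      have h7 := mul_add ((-c)⁻¹) ((inner ℝ y0 x : ℝ)) (t * c)
      linarith [h3, h6, h7]
    have : (t : EReal) < legendre (legendre φ) x :=
      lt_of_lt_of_le (EReal.coe_lt_coe_iff.2 hgt) hlb
    exact absurd (this.trans ht1) (lt_irrefl _)
  · -- c = 0
    have hbd : ∀ x' (r' : ℝ), φ x' = (r' : EReal) → (inner ℝ y0 x' : ℝ) < u := by
      intro x' r' hr
      have hmem : (x', r') ∈ epi φ := by simp [epi, hr]
      have h2 := hfu _ hmem
      rw [hy0 x' r', hceq] at h2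
      linarith
    have hgx : u < (inner ℝ y0 x : ℝ) := by
      have := hux
      rw [hy0 x t, hceq] at this
      linarith
    -- get an affine minorant via a second separation
    have hnotin : (x₀, r₀ - 1) ∉ epi φ := by
      simp only [epi, Set.mem_setOf_eq, not_le, e₀]
      exact EReal.coe_lt_coe_iff.2 (by linarith)
    obtain ⟨f₀, u₀, hfu₀, hux₀⟩ := geometric_hahn_banach_closed_point hcv hcl hnotin
    obtain ⟨y1, hy1⟩ := sep_decomp f₀
    have hc₀ : f₀ ((0:E),(1:ℝ)) < 0 := by
      have hmem : (x₀, r₀) ∈ epi φ := by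
        simp only [epi, Set.mem_setOf_eq]
        rw [e₀]
      have h2 := hfu₀ _ hmem
      have h3 := hux₀
      rw [hy1 x₀ r₀] at h2
      rw [hy1 x₀ (r₀ - 1)] at h3
      have he : (r₀ - 1) * f₀ ((0:E),(1:ℝ)) = r₀ * f₀ ((0:E),(1:ℝ)) - f₀ ((0:E),(1:ℝ)) := by ring
      linarith
    obtain ⟨y₁, α₁, hA₁, _, _⟩ := bound_of_sep_neg φ f₀ u₀ hfu₀ hc₀
    set d := (inner ℝ y0 x : ℝ) - u with hd
    have hdpos : 0 < d := by rw [hd]; linarith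
    set lam := max 0 ((t - (inner ℝ y₁ x : ℝ) + α₁ + 1) / d) with hlam
    have hlam0 : (0:ℝ) ≤ lam := le_max_left _ _
    set Y := y₁ + lam • y0 with hY
    set A := α₁ + lam * u with hA'
    have hAbd : ∀ x' (r' : ℝ), φ x' = (r' : EReal) → (inner ℝ x' Y : ℝ) - r' ≤ A := by
      intro x' r' hr
      have h1 := hA₁ x' r' hr
      have h2 := hbd x' r' hr
      have hex : (inner ℝ x' Y : ℝ) = (inner ℝ x' y₁ : ℝ) + lam * (inner ℝ y0 x' : ℝ) := by
        rw [hY, inner_add_right, real_inner_smul_right, real_inner_comm x' y0]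
      rw [hex, hA']
      have := mul_le_mul_of_nonneg_left (le_of_lt h2) hlam0
      linarith
    have hleg := legendre_le_of_affine_bound φ hbot Y A hAbd
    have hlb := le_biconj φ Y A hleg x
    have hgt : t < (inner ℝ Y x : ℝ) - A := by
      have hex : (inner ℝ Y x : ℝ) = (inner ℝ y₁ x : ℝ) + lam * (inner ℝ y0 x : ℝ) := by
        rw [hY, inner_add_left, real_inner_smul_left]
      rw [hex, hA']
      have hlamge : (t - (inner ℝ y₁ x : ℝ) + α₁ + 1) / d ≤ lam := le_max_right _ _
      have h8 := mul_le_mul_of_nonneg_right hlamge (le_of_lt hdpos)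
      have h9 : (t - (inner ℝ y₁ x : ℝ) + α₁ + 1) / d * d = t - (inner ℝ y₁ x : ℝ) + α₁ + 1 :=
        div_mul_cancel₀ _ (ne_of_gt hdpos)
      have h10 : lam * d = lam * (inner ℝ y0 x : ℝ) - lam * u := by rw [hd]; ring
      linarith
    have : (t : EReal) < legendre (legendre φ) x :=
      lt_of_lt_of_le (EReal.coe_lt_coe_iff.2 hgt) hlb
    exact absurd (this.trans ht1) (lt_irrefl _)

/-- Fenchel–Moreau. -/
lemma biconj_eq (φ : E → EReal) (hbot : ∀ x, φ x ≠ ⊥) (hproper : ∃ x, φ x ≠ ⊤)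
    (hconv : ConvexEReal φ) (hlsc : LowerSemicontinuous φ) (x : E) :
    legendre (legendre φ) x = φ x :=
  le_antisymm (biconj_le φ hbot x) (biconj_ge φ hbot hproper hconv hlsc x)

lemma legendre_ne_bot (φ : E → EReal) (hbot : ∀ x, φ x ≠ ⊥) (hproper : ∃ x, φ x ≠ ⊤)
    (y : E) : legendre φ y ≠ ⊥ := by
  obtain ⟨x₀, hx₀⟩ := hproper
  have e₀ : φ x₀ = (((φ x₀).toReal : ℝ) : EReal) := (EReal.coe_toReal hx₀ (hbot x₀)).symm
  have h : (((inner ℝ x₀ y : ℝ) - (φ x₀).toReal : ℝ) : EReal) ≤ legendre φ y := by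
    have h := le_iSup (fun x' => ((inner ℝ x' y : ℝ) : EReal) - φ x') x₀
    rw [e₀, ← EReal.coe_sub] at h
    exact h
  intro hB
  rw [hB] at h
  exact (EReal.coe_ne_bot _) (le_bot_iff.1 h)

lemma biSup_coe_eq (K : Set (EuclideanSpace ℝ (Fin n))) (g : E → ℝ) (z₀ : E) (hz₀ : z₀ ∈ K)
    (hmax : ∀ z ∈ K, g z ≤ g z₀) :
    (⨆ z ∈ K, ((g z : ℝ) : EReal)) = ((g z₀ : ℝ) : EReal) := by
  refine le_antisymm (iSup₂_le fun z hz => EReal.coe_le_coe_iff.2 (hmax z hz)) ?_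
  exact le_iSup₂ (f := fun z (_ : z ∈ K) => ((g z : ℝ) : EReal)) z₀ hz₀

/-- For `φ` proper convex lsc and a convex body `L`, `s > 0`,
`(φ* - h_{sL})*(x) = sup_{z ∈ sL} φ(x+z)`. -/
theorem statement2 (n : ℕ) (φ : EuclideanSpace ℝ (Fin n) → EReal)
    (hbot : ∀ x, φ x ≠ ⊥) (hproper : ∃ x, φ x ≠ ⊤)
    (hconv : ConvexEReal φ) (hlsc : LowerSemicontinuous φ)
    (L : Set (EuclideanSpace ℝ (Fin n)))
    (hLconv : Convex ℝ L) (hLcomp : IsCompact L) (hLint : (interior L).Nonempty)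
    (s : ℝ) (hs : 0 < s) :
    ∀ x, legendre (fun y => legendre φ y - supportFn (s • L) y) x
      = ⨆ z ∈ s • L, φ (x + z) := by
  intro x
  have hKne : (s • L).Nonempty := (hLint.mono interior_subset).smul_set
  have hKcomp : IsCompact (s • L) := hLcomp.smul s
  have hFM := biconj_eq φ hbot hproper hconv hlsc
  have hbne : ∀ y, legendre φ y ≠ ⊥ := legendre_ne_bot φ hbot hproper
  have hstep : ∀ y : EuclideanSpace ℝ (Fin n),
      ((inner ℝ y x : ℝ) : EReal) - (legendre φ y - supportFn (s • L) y)
      = ⨆ z ∈ s • L, (((inner ℝ y (x + z) : ℝ)) : EReal) - legendre φ y := by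
    intro y
    have hcont : ContinuousOn (fun z : EuclideanSpace ℝ (Fin n) => (inner ℝ z y : ℝ)) (s • L) :=
      (continuous_id.inner continuous_const).continuousOn
    obtain ⟨z₀, hz₀K, hz₀max⟩ := hKcomp.exists_isMaxOn hKne hcont
    have hsf : supportFn (s • L) y = ((inner ℝ z₀ y : ℝ) : EReal) :=
      biSup_coe_eq (s • L) (fun z => (inner ℝ z y : ℝ)) z₀ hz₀K hz₀max
    rcases eq_or_ne (legendre φ y) ⊤ with hb | hb
    · rw [hb, hsf, EReal.top_sub_coe, EReal.sub_top]
      refine (le_antisymm (iSup₂_le fun z _ => le_of_eq (EReal.sub_top _)) bot_le).symm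
    · have eb : legendre φ y = (((legendre φ y).toReal : ℝ) : EReal) :=
        (EReal.coe_toReal hb (hbne y)).symm
      set β := (legendre φ y).toReal with hβ
      have hmax2 : ∀ z ∈ s • L, (inner ℝ y (x + z) : ℝ) - β ≤ (inner ℝ y (x + z₀) : ℝ) - β := by
        intro z hz
        have h := hz₀max hz
        simp only [inner_add_right]
        rw [real_inner_comm z y, real_inner_comm z₀ y]
        simp only [Set.mem_setOf_eq] at h
        linarith
      have hrhs : (⨆ z ∈ s • L, (((inner ℝ y (x + z) : ℝ)) : EReal) - legendre φ y)
          = (((inner ℝ y (x + z₀) : ℝ) - β : ℝ) : EReal) := by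
        rw [eb]
        simp only [← EReal.coe_sub]
        exact biSup_coe_eq (s • L) (fun z => (inner ℝ y (x + z) : ℝ) - β) z₀ hz₀K hmax2
      rw [hrhs, eb, hsf, ← EReal.coe_sub, ← EReal.coe_sub, EReal.coe_eq_coe_iff,
        inner_add_right, real_inner_comm z₀ y]
      ring
  calc legendre (fun y => legendre φ y - supportFn (s • L) y) x
      = ⨆ y, ⨆ z ∈ s • L, (((inner ℝ y (x + z) : ℝ)) : EReal) - legendre φ y :=
        iSup_congr hstep
    _ = ⨆ z ∈ s • L, ⨆ y, (((inner ℝ y (x + z) : ℝ)) : EReal) - legendre φ y := by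
        rw [iSup_comm]
        exact iSup_congr fun z => iSup_comm
    _ = ⨆ z ∈ s • L, φ (x + z) := by
        refine iSup_congr fun z => iSup_congr fun hz => hFM (x + z)

end
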